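/- Let D be squarefree of degree 2g+2 with g ≥ 1 and (P,Q) a solution of P² - D·Q² = 1 with deg P = n > 0. If P(e) = 1 for every root e of D (equivalently, |E⁻| = 0), then there exists a polynomial solution of the Pell–Abel equation for D of degree n/2; in particular n is even and the solution P is not primitive. -/

import Mathlib

open Polynomial

/-- Let `D` be monic squarefree of degree `2g+2` with `g ≥ 1` and `(P,Q)` a solution of
`P² - D·Q² = 1` with `deg P = n > 0`. If `P(e) = 1` for every root `e` of `D`, then there
is a polynomial solution of the Pell–Abel equation for `D` of degree `n/2`; in particular
`n` is even and `P` is not primitive. -/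
theorem pellAbel_all_plus_one_not_primitive (g n : ℕ) (hg : 1 ≤ g)
    (D P Q : Polynomial ℂ) (hDsf : Squarefree D) (hDmonic : D.Monic)
    (hDdeg : D.natDegree = 2 * g + 2)
    (hPA : P ^ 2 - D * Q ^ 2 = 1) (hn : P.natDegree = n) (hnpos : 0 < n)
    (hall : ∀ e : ℂ, D.eval e = 0 → P.eval e = 1) :
    ∃ P' Q' : Polynomial ℂ, P' ^ 2 - D * Q' ^ 2 = 1 ∧
      2 * P'.natDegree = n ∧ 0 < P'.natDegree := by
  have hD0 : D ≠ 0 := hDmonic.ne_zero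
  have hPdegpos : 0 < P.natDegree := hn ▸ hnpos
  have hPm1 : P - 1 ≠ 0 := by
    intro h
    have : P = 1 := by linear_combination (norm := ring_nf) h
    rw [this] at hPdegpos; simp at hPdegpos
  have hPp1 : P + 1 ≠ 0 := by
    intro h
    have : P = -1 := by linear_combination (norm := ring_nf) h
    rw [this] at hPdegpos; simp at hPdegpos
  -- D divides P - 1
  have hsep : D.Separable := PerfectField.separable_iff_squarefree.mpr hDsf
  have hnodup : D.roots.Nodup := nodup_roots hsep
  have hle : D.roots ≤ (P - 1).roots := by
    rw [Multiset.le_iff_count]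
    intro a
    by_cases ha : a ∈ D.roots
    · have h1 : D.roots.count a = 1 := Multiset.count_eq_one_of_mem hnodup ha
      rw [h1, count_roots]
      have haroot : (P - 1).eval a = 0 := by
        have := hall a ((mem_roots hD0).mp ha)
        simp [this]
      exact (rootMultiplicity_pos hPm1).mpr haroot
    · simp [Multiset.count_eq_zero_of_notMem ha]
  have hdvd : D ∣ P - 1 := by
    have hDeq : D = (D.roots.map fun a => X - C a).prod :=
      (IsAlgClosed.splits D).eq_prod_roots_of_monic hDmonic
    calc D = (D.roots.map fun a => X - C a).prod := hDeq
      _ ∣ ((P - 1).roots.map fun a => X - C a).prod :=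
          Multiset.prod_dvd_prod_of_le (Multiset.map_le_map hle)
      _ ∣ P - 1 := prod_multiset_X_sub_C_dvd _
  obtain ⟨A, hA⟩ := hdvd
  have hA0 : A ≠ 0 := by rintro rfl; simp [hA] at hPm1
  have hkey : A * (P + 1) = Q ^ 2 := by
    have h1 : D * (A * (P + 1)) = D * Q ^ 2 := by
      have : (P - 1) * (P + 1) = D * Q ^ 2 := by linear_combination hPA
      linear_combination (P + 1) * hA.symm + this
    exact mul_left_cancel₀ hD0 h1
  have hcop : IsCoprime (P - 1) (P + 1) := by
    refine ⟨-(C (2⁻¹ : ℂ)), C ((2⁻¹ : ℂ)), ?_⟩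
    have : ((C (2⁻¹ : ℂ)) * 2 : Polynomial ℂ) = 1 := by
      rw [← map_ofNat C 2, ← C_mul]; norm_num
    linear_combination this
  have hcopA : IsCoprime A (P + 1) := hcop.of_isCoprime_of_dvd_left ⟨D, by rw [hA]; ring⟩
  have hhalf : (C (2⁻¹ : ℂ)) * 2 = 1 := by
    rw [← map_ofNat C 2, ← C_mul]; norm_num
  -- P + 1 is a square up to a constant
  obtain ⟨B, uB, hB⟩ := exists_associated_pow_of_mul_eq_pow' hcopA.symm
    (show (P + 1) * A = Q ^ 2 by rw [mul_comm]; exact hkey)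
  obtain ⟨c, hcu, hcB⟩ := Polynomial.isUnit_iff.mp uB.isUnit
  have hc0 : c ≠ 0 := hcu.ne_zero
  have hPB : B ^ 2 * C c = P + 1 := by rw [hcB]; exact hB
  -- A is a square up to a constant
  obtain ⟨R, uR, hR⟩ := exists_associated_pow_of_mul_eq_pow' hcopA hkey
  obtain ⟨d, hdu, hdR⟩ := Polynomial.isUnit_iff.mp uR.isUnit
  have hd0 : d ≠ 0 := hdu.ne_zero
  have hAR : R ^ 2 * C d = A := by rw [hdR]; exact hR
  -- square roots of c/2 and d/2
  obtain ⟨α, hα⟩ := IsAlgClosed.exists_pow_nat_eq (c / 2) (show 0 < 2 by norm_num)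
  obtain ⟨β, hβ⟩ := IsAlgClosed.exists_pow_nat_eq (d / 2) (show 0 < 2 by norm_num)
  have hα0 : α ≠ 0 := by
    intro h
    apply hc0
    have hc2 : c = 2 * α ^ 2 := by rw [hα]; ring
    rw [hc2, h]; ring
  have hB0 : B ≠ 0 := by
    intro h; rw [h] at hPB; simp at hPB
    exact hPp1 hPB.symm
  have hca : (C α) ^ 2 = C c * C (2⁻¹ : ℂ) := by
    rw [← C_pow, ← C_mul, hα]; ring_nf
  have hcb : (C β) ^ 2 = C d * C (2⁻¹ : ℂ) := by
    rw [← C_pow, ← C_mul, hβ]; ring_nf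
  have hdegB : 2 * B.natDegree = n := by
    have h1 : (B ^ 2 * C c).natDegree = (P + 1).natDegree := by rw [hPB]
    rw [natDegree_mul_C hc0, natDegree_pow] at h1
    rwa [show (1 : Polynomial ℂ) = C 1 from C_1.symm, natDegree_add_C, hn] at h1
  refine ⟨C α * B, C β * R, ?_, ?_, ?_⟩
  · linear_combination B ^ 2 * hca - D * R ^ 2 * hcb + C (2⁻¹ : ℂ) * hPB -
      C (2⁻¹ : ℂ) * D * hAR + C (2⁻¹ : ℂ) * hA + hhalf
  · rw [natDegree_C_mul hα0]
    exact hdegB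
  · rw [natDegree_C_mul hα0]
    omega
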